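/- Let K ≥ 1 and 1 ≤ L ≤ K be integers, n ≥ 2 an integer, p ∈ (0,1], and P_1,…,P_K > 0. Suppose ν* ∈ ℝ and b* ∈ [0,1]^K satisfy ∑_{i=1}^K b_i* = L, and for each i: b_i* = 0 whenever ν* < −P_i n p; b_i* = 1 whenever ν* > −P_i n p (1−p)^{n−1}; and otherwise b_i* = (1/p)·[1 − (−ν*/(P_i n p))^{1/(n−1)}]. Then b* maximizes H_n(b) = ∑_{i=1}^K P_i (1 − (1 − b_i p)^n) over the feasible set D_L = {b ∈ [0,1]^K : ∑_{i=1}^K b_i = L}. -/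

import Mathlib

/-- Tangent-line inequality for the convex function `x ↦ x^n` on `[0,∞)`. -/
lemma pow_tangent_aux (n : ℕ) (hn : 1 ≤ n) {a b : ℝ} (ha : 0 ≤ a) (hb : 0 ≤ b) :
    b ^ n + (n : ℝ) * b ^ (n - 1) * (a - b) ≤ a ^ n := by
  have hgeom : (∑ i ∈ Finset.range n, a ^ i * b ^ (n - 1 - i)) * (a - b) = a ^ n - b ^ n :=
    geom_sum₂_mul a b n
  have hconst : ∑ _i ∈ Finset.range n, b ^ (n - 1) = (n : ℝ) * b ^ (n - 1) := by
    simp [mul_comm]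
  rcases le_total b a with h | h
  · have hterm : ∀ i ∈ Finset.range n, b ^ (n - 1) ≤ a ^ i * b ^ (n - 1 - i) := by
      intro i hi
      have hi' : i < n := Finset.mem_range.mp hi
      calc b ^ (n - 1) = b ^ i * b ^ (n - 1 - i) := by
            rw [← pow_add]; congr 1; omega
        _ ≤ a ^ i * b ^ (n - 1 - i) :=
            mul_le_mul_of_nonneg_right (pow_le_pow_left₀ hb h i) (pow_nonneg hb _)
    have hS : (n : ℝ) * b ^ (n - 1) ≤ ∑ i ∈ Finset.range n, a ^ i * b ^ (n - 1 - i) := by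
      rw [← hconst]; exact Finset.sum_le_sum hterm
    nlinarith [mul_le_mul_of_nonneg_right hS (sub_nonneg.mpr h)]
  · have hterm : ∀ i ∈ Finset.range n, a ^ i * b ^ (n - 1 - i) ≤ b ^ (n - 1) := by
      intro i hi
      have hi' : i < n := Finset.mem_range.mp hi
      calc a ^ i * b ^ (n - 1 - i) ≤ b ^ i * b ^ (n - 1 - i) :=
            mul_le_mul_of_nonneg_right (pow_le_pow_left₀ ha h i) (pow_nonneg hb _)
        _ = b ^ (n - 1) := by rw [← pow_add]; congr 1; omega
    have hS : ∑ i ∈ Finset.range n, a ^ i * b ^ (n - 1 - i) ≤ (n : ℝ) * b ^ (n - 1) := by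
      rw [← hconst]; exact Finset.sum_le_sum hterm
    nlinarith [mul_le_mul_of_nonpos_right hS (sub_nonpos.mpr h)]

/-- If `b*` together with a multiplier `ν*` satisfies the KKT-form
description from Theorem 1 (policy 1, mobile user), then `b*` maximizes the
hit probability `H_n` over `D_L = {b ∈ [0,1]^K : ∑ b i = L}`. -/
theorem kkt_point_maximizes_hit_prob_policy1
    (K L n : ℕ) (hK : 1 ≤ K) (hL1 : 1 ≤ L) (hLK : L ≤ K) (hn : 2 ≤ n)
    (p : ℝ) (hp : p ∈ Set.Ioc (0 : ℝ) 1) (P : Fin K → ℝ) (hP : ∀ i, 0 < P i)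
    (ν : ℝ) (b : Fin K → ℝ)
    (hbmem : ∀ i, b i ∈ Set.Icc (0 : ℝ) 1)
    (hsum : ∑ i, b i = (L : ℝ))
    (hzero : ∀ i, ν < -(P i * n * p) → b i = 0)
    (hone : ∀ i, -(P i * n * p * (1 - p) ^ (n - 1)) < ν → b i = 1)
    (hmid : ∀ i, -(P i * n * p) ≤ ν → ν ≤ -(P i * n * p * (1 - p) ^ (n - 1)) →
      b i = (1 / p) * (1 - (-ν / (P i * n * p)) ^ ((1 : ℝ) / ((n : ℝ) - 1)))) :
    ∀ c : Fin K → ℝ, (∀ i, c i ∈ Set.Icc (0 : ℝ) 1) → ∑ i, c i = (L : ℝ) →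
      ∑ i, P i * (1 - (1 - c i * p) ^ n) ≤ ∑ i, P i * (1 - (1 - b i * p) ^ n) := by
  intro c hc hcsum
  obtain ⟨hp0, hp1⟩ := hp
  have hn1 : 1 ≤ n := by omega
  have hnR : (2 : ℝ) ≤ (n : ℝ) := by exact_mod_cast hn
  have key : ∀ i, P i * (1 - (1 - c i * p) ^ n) ≤
      P i * (1 - (1 - b i * p) ^ n) + (-ν) * (c i - b i) := by
    intro i
    have hPi := hP i
    have hA0 : 0 < P i * (n : ℝ) * p := by positivity
    obtain ⟨hb0, hb1⟩ := hbmem i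
    obtain ⟨hc0, hc1⟩ := hc i
    have hx : 0 ≤ 1 - c i * p := by nlinarith
    have hy : 0 ≤ 1 - b i * p := by nlinarith
    have htan := pow_tangent_aux n hn1 hx hy
    have hkkt : P i * (n : ℝ) * p * (1 - b i * p) ^ (n - 1) * (c i - b i) ≤
        (-ν) * (c i - b i) := by
      rcases lt_or_ge ν (-(P i * (n : ℝ) * p)) with h1 | h1
      · have hbz := hzero i h1
        rw [hbz]
        simp only [zero_mul, sub_zero, one_pow, mul_one]
        nlinarith
      · rcases lt_or_ge (-(P i * (n : ℝ) * p * (1 - p) ^ (n - 1))) ν with h2 | h2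
        · have hbo := hone i h2
          rw [hbo, one_mul]
          have h2' : -ν ≤ P i * (n : ℝ) * p * (1 - p) ^ (n - 1) := by linarith
          exact mul_le_mul_of_nonpos_right h2' (by linarith)
        · have hb := hmid i h1 h2
          have hν0 : 0 ≤ -ν := by
            nlinarith [pow_nonneg (by linarith : (0:ℝ) ≤ 1 - p) (n - 1)]
          have hratio : 0 ≤ -ν / (P i * (n : ℝ) * p) := div_nonneg hν0 hA0.le
          have hp' : p ≠ 0 := ne_of_gt hp0
          have h1bp : 1 - b i * p =
              (-ν / (P i * (n : ℝ) * p)) ^ ((1 : ℝ) / ((n : ℝ) - 1)) := by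
            rw [hb]; field_simp; ring
          have hcast : ((n - 1 : ℕ) : ℝ) = (n : ℝ) - 1 := by
            push_cast [Nat.cast_sub hn1]; ring
          have hne : (n : ℝ) - 1 ≠ 0 := by linarith
          have hpow : ((-ν / (P i * (n : ℝ) * p)) ^ ((1 : ℝ) / ((n : ℝ) - 1))) ^ (n - 1 : ℕ)
              = -ν / (P i * (n : ℝ) * p) := by
            rw [← Real.rpow_natCast (_ ^ _) (n - 1), ← Real.rpow_mul hratio, hcast,
              one_div, inv_mul_cancel₀ hne, Real.rpow_one]
          rw [h1bp, hpow]
          have : P i * (n : ℝ) * p * (-ν / (P i * (n : ℝ) * p)) = -ν := by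
            field_simp
          rw [this]
    nlinarith [mul_le_mul_of_nonneg_left htan hPi.le]
  have hsum2 : ∑ i, ((-ν) * (c i - b i)) = 0 := by
    rw [← Finset.mul_sum, Finset.sum_sub_distrib, hcsum, hsum, sub_self, mul_zero]
  calc ∑ i, P i * (1 - (1 - c i * p) ^ n)
      ≤ ∑ i, (P i * (1 - (1 - b i * p) ^ n) + (-ν) * (c i - b i)) :=
        Finset.sum_le_sum fun i _ => key i
    _ = ∑ i, P i * (1 - (1 - b i * p) ^ n) + ∑ i, (-ν) * (c i - b i) :=
        Finset.sum_add_distrib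
    _ = ∑ i, P i * (1 - (1 - b i * p) ^ n) := by rw [hsum2, add_zero]
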